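/- Let σ_1,…,σ_m be independent Rademacher variables, G ∈ ℝ^{m×c} with |G_{ij}| ≤ Λ_Q, and ψ_1,…,ψ_m in a Hilbert space with ‖ψ_i‖ ≤ Λ_W. Then E_σ sup_{α ∈ Δ} ‖(1/m)·Σ_{i=1}^m σ_i (Gα)_i ψ_i‖ ≤ Λ_Q·Λ_W·√c/√m, where Δ = {α ∈ ℝ^c : α ≥ 0, Σ_j α_j = 1}. -/

import Mathlib

open MeasureTheory ProbabilityTheory Finset Set

/-- Jensen-type bound: for a nonnegative integrable function on a probability
space, the integral of its square root is at most the square root of its integral. -/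
lemma aux_integral_sqrt_le {Ω : Type*} [MeasurableSpace Ω] (μ : Measure Ω)
    [IsProbabilityMeasure μ] (f : Ω → ℝ) (hf : Integrable f μ) (h0 : ∀ ω, 0 ≤ f ω) :
    ∫ ω, Real.sqrt (f ω) ∂μ ≤ Real.sqrt (∫ ω, f ω ∂μ) := by
  set I := ∫ ω, f ω ∂μ with hI
  have hI0 : 0 ≤ I := integral_nonneg h0
  have hsm : AEStronglyMeasurable (fun ω => Real.sqrt (f ω)) μ :=
    Real.continuous_sqrt.comp_aestronglyMeasurable hf.1
  have hint : Integrable (fun ω => Real.sqrt (f ω)) μ := by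
    refine Integrable.mono' ((hf.add (integrable_const 1)).div_const 2) hsm ?_
    filter_upwards with ω
    have h := h0 ω
    have hs := Real.sq_sqrt h
    have hn := Real.sqrt_nonneg (f ω)
    rw [Real.norm_eq_abs, abs_of_nonneg hn]
    simp only [Pi.add_apply]
    nlinarith [sq_nonneg (Real.sqrt (f ω) - 1)]
  rcases eq_or_lt_of_le hI0 with h | h
  · have hz : f =ᵐ[μ] 0 := by
      rw [← integral_eq_zero_iff_of_nonneg h0 hf]; exact h.symm
    have : ∫ ω, Real.sqrt (f ω) ∂μ = 0 := by
      have hz' : (fun ω => Real.sqrt (f ω)) =ᵐ[μ] fun _ => (0:ℝ) := by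
        filter_upwards [hz] with ω hω
        simp only [Pi.zero_apply] at hω
        simp [hω]
      rw [integral_congr_ae hz']
      simp
    rw [this]; exact Real.sqrt_nonneg _
  · have hsI : 0 < Real.sqrt I := Real.sqrt_pos.2 h
    have hle : ∀ ω, Real.sqrt (f ω) ≤ (f ω + I) / (2 * Real.sqrt I) := by
      intro ω
      rw [le_div_iff₀ (by positivity : (0:ℝ) < 2 * Real.sqrt I)]
      have h1 := Real.sq_sqrt (h0 ω)
      have h2 := Real.sq_sqrt hI0
      nlinarith [sq_nonneg (Real.sqrt (f ω) - Real.sqrt I), Real.sqrt_nonneg (f ω)]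
    calc ∫ ω, Real.sqrt (f ω) ∂μ ≤ ∫ ω, (f ω + I) / (2 * Real.sqrt I) ∂μ :=
          integral_mono hint ((hf.add (integrable_const I)).div_const _) hle
      _ = (I + I) / (2 * Real.sqrt I) := by
          rw [integral_div, integral_add hf (integrable_const I), integral_const]
          simp [measure_univ, ← hI]
      _ = Real.sqrt I := by
          rw [div_eq_iff (by positivity : (2 * Real.sqrt I) ≠ 0)]
          nlinarith [Real.sq_sqrt hI0]

/-- Rademacher complexity bound over the probability simplex (Lemma 2 step):
E_σ sup_{α∈Δ} ‖(1/m) Σ σ_i (Gα)_i ψ_i‖ ≤ Λ_Q Λ_W √c / √m. -/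
theorem stmt10 {Ω H : Type*} [MeasurableSpace Ω] [NormedAddCommGroup H]
    [InnerProductSpace ℝ H]
    (μ : Measure Ω) [IsProbabilityMeasure μ]
    (m c : ℕ) (hm : 1 ≤ m) (σ : Fin m → Ω → ℝ) (hmeas : ∀ i, Measurable (σ i))
    (hindep : iIndepFun (m := fun _ => Real.measurableSpace) σ μ)
    (hrad : ∀ i, μ {ω | σ i ω = 1} = 1/2 ∧ μ {ω | σ i ω = -1} = 1/2)
    (G : Matrix (Fin m) (Fin c) ℝ) (ΛQ ΛW : ℝ)
    (hG : ∀ i j, |G i j| ≤ ΛQ) (ψ : Fin m → H) (hψ : ∀ i, ‖ψ i‖ ≤ ΛW) :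
    (∫ ω, sSup ((fun α : Fin c → ℝ =>
        ‖(m : ℝ)⁻¹ • ∑ i, (σ i ω * G.mulVec α i) • ψ i‖) '' stdSimplex ℝ (Fin c)) ∂μ)
      ≤ ΛQ * ΛW * Real.sqrt c / Real.sqrt m := by
  have hm0 : (0:ℝ) < m := by exact_mod_cast hm
  -- a.e. each σ i takes values ±1
  have hae : ∀ i, ∀ᵐ ω ∂μ, σ i ω = 1 ∨ σ i ω = -1 := by
    intro i
    have hA : MeasurableSet {ω | σ i ω = 1} := hmeas i (measurableSet_singleton 1)
    have hB : MeasurableSet {ω | σ i ω = -1} := hmeas i (measurableSet_singleton (-1))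
    have hd : Disjoint {ω | σ i ω = 1} {ω | σ i ω = -1} := by
      rw [Set.disjoint_left]; intro ω h1 h2
      simp only [Set.mem_setOf_eq] at h1 h2
      rw [h1] at h2; norm_num at h2
    have hu : μ ({ω | σ i ω = 1} ∪ {ω | σ i ω = -1}) = 1 := by
      rw [measure_union hd hB, (hrad i).1, (hrad i).2]
      exact ENNReal.add_halves 1
    have hc : μ ({ω | σ i ω = 1} ∪ {ω | σ i ω = -1})ᶜ = 0 := by
      rw [measure_compl (hA.union hB) (measure_ne_top _ _), hu, measure_univ, tsub_self]
    have hset : {ω | ¬(σ i ω = 1 ∨ σ i ω = -1)}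
        = ({ω | σ i ω = 1} ∪ {ω | σ i ω = -1})ᶜ := by
      ext ω; simp [not_or]
    rw [ae_iff, hset]
    exact hc
  -- integrability of σ i and products
  have hσint : ∀ i, Integrable (σ i) μ := by
    intro i
    refine Integrable.mono' (integrable_const 1) (hmeas i).aestronglyMeasurable ?_
    filter_upwards [hae i] with ω hω
    rcases hω with h | h <;> simp [h]
  have hσmulint : ∀ i k, Integrable (fun ω => σ i ω * σ k ω) μ := by
    intro i k
    refine Integrable.mono' (integrable_const 1) ((hmeas i).mul (hmeas k)).aestronglyMeasurable ?_
    filter_upwards [hae i, hae k] with ω h1 h2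
    rcases h1 with h1 | h1 <;> rcases h2 with h2 | h2 <;> simp [h1, h2]
  -- E σ i = 0
  have hE0 : ∀ i, ∫ ω, σ i ω ∂μ = 0 := by
    intro i
    have hA : MeasurableSet {ω | σ i ω = 1} := hmeas i (measurableSet_singleton 1)
    have hB : MeasurableSet {ω | σ i ω = -1} := hmeas i (measurableSet_singleton (-1))
    have heq : σ i =ᵐ[μ] fun ω =>
        Set.indicator {ω | σ i ω = 1} (fun _ => (1:ℝ)) ω
          - Set.indicator {ω | σ i ω = -1} (fun _ => (1:ℝ)) ω := by
      filter_upwards [hae i] with ω hω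
      rcases hω with h | h
      · simp only [Set.indicator_apply, Set.mem_setOf_eq, h]
        norm_num
      · simp only [Set.indicator_apply, Set.mem_setOf_eq, h]
        norm_num
    rw [integral_congr_ae heq, integral_sub ((integrable_const (1:ℝ)).indicator hA)
      ((integrable_const (1:ℝ)).indicator hB),
      integral_indicator_const _ hA, integral_indicator_const _ hB, measureReal_def, measureReal_def, (hrad i).1, (hrad i).2]
    simp
  -- E σ i σ k
  have hEmul : ∀ i k, i ≠ k → ∫ ω, σ i ω * σ k ω ∂μ = 0 := by
    intro i k hik
    have h := IndepFun.integral_fun_mul_eq_mul_integral (hindep.indepFun hik) (hσint i).1 (hσint k).1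
    have : ∫ ω, σ i ω * σ k ω ∂μ = (∫ ω, σ i ω ∂μ) * ∫ ω, σ k ω ∂μ := h
    rw [this, hE0 i, hE0 k, mul_zero]
  have hEsq : ∀ i, ∫ ω, σ i ω * σ i ω ∂μ = 1 := by
    intro i
    have heq : (fun ω => σ i ω * σ i ω) =ᵐ[μ] fun _ => (1:ℝ) := by
      filter_upwards [hae i] with ω hω
      rcases hω with h | h <;> simp [h]
    rw [integral_congr_ae heq]
    simp
  -- the column vectors
  set u : Fin c → Fin m → H := fun j i => G i j • ψ i with hu
  set v : Fin c → Ω → H := fun j ω => ∑ i, σ i ω • u j i with hv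
  set Q : Ω → ℝ := fun ω => ∑ j, ‖v j ω‖ ^ 2 with hQ
  have hQ0 : ∀ ω, 0 ≤ Q ω := fun ω => Finset.sum_nonneg fun j _ => sq_nonneg _
  -- measurability of v and Q
  have hvmeas : ∀ j, AEStronglyMeasurable (v j) μ := by
    intro j
    apply Finset.aestronglyMeasurable_fun_sum
    intro i _
    have hcont : Continuous fun r : ℝ => r • u j i :=
      continuous_id.smul continuous_const
    exact hcont.comp_aestronglyMeasurable (hmeas i).aestronglyMeasurable
  have hnvint : ∀ j, Integrable (fun ω => ‖v j ω‖ ^ 2) μ := by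
    intro j
    refine Integrable.mono' (integrable_const ((∑ i, ‖u j i‖) ^ 2))
      (((hvmeas j).norm.pow 2) : ) ?_
    filter_upwards [ae_all_iff.2 hae] with ω hω
    rw [Real.norm_eq_abs, abs_of_nonneg (sq_nonneg _)]
    have hb : ‖v j ω‖ ≤ ∑ i, ‖u j i‖ := by
      refine le_trans (norm_sum_le _ _) (Finset.sum_le_sum fun i _ => ?_)
      rw [norm_smul]
      rcases hω i with h | h <;> simp [h]
    have hn : (0:ℝ) ≤ ‖v j ω‖ := norm_nonneg _
    nlinarith
  have hQint : Integrable Q μ := integrable_finset_sum _ fun j _ => hnvint j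
  -- exact second moment
  have hVval : ∀ j, ∫ ω, ‖v j ω‖ ^ 2 ∂μ = ∑ i, ‖u j i‖ ^ 2 := by
    intro j
    have hexp : ∀ ω, ‖v j ω‖ ^ 2
        = ∑ i, ∑ k, (σ i ω * σ k ω) * inner ℝ (u j i) (u j k) := by
      intro ω
      rw [← real_inner_self_eq_norm_sq]
      simp only [hv, sum_inner, inner_sum, real_inner_smul_left, real_inner_smul_right]
      refine Finset.sum_congr rfl fun i _ => Finset.sum_congr rfl fun k _ => by
        rw [real_inner_comm]
        ring
    calc ∫ ω, ‖v j ω‖ ^ 2 ∂μ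
        = ∫ ω, ∑ i, ∑ k, (σ i ω * σ k ω) * inner ℝ (u j i) (u j k) ∂μ := by
          exact integral_congr_ae (Filter.Eventually.of_forall hexp)
      _ = ∑ i, ∑ k, ∫ ω, (σ i ω * σ k ω) * inner ℝ (u j i) (u j k) ∂μ := by
          rw [integral_finset_sum _ fun i _ => integrable_finset_sum _ fun k _ =>
            (hσmulint i k).mul_const _]
          exact Finset.sum_congr rfl fun i _ =>
            integral_finset_sum _ fun k _ => (hσmulint i k).mul_const _
      _ = ∑ i, ∑ k, (∫ ω, σ i ω * σ k ω ∂μ) * inner ℝ (u j i) (u j k) := by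
          refine Finset.sum_congr rfl fun i _ => Finset.sum_congr rfl fun k _ => ?_
          exact integral_mul_const _ _
      _ = ∑ i, ‖u j i‖ ^ 2 := by
          refine Finset.sum_congr rfl fun i _ => ?_
          rw [Finset.sum_eq_single i]
          · rw [hEsq i, one_mul, real_inner_self_eq_norm_sq]
          · intro k _ hk
            rw [hEmul i k (Ne.symm hk), zero_mul]
          · intro h; exact absurd (Finset.mem_univ i) h
  -- pointwise sup bound
  have hsup : ∀ ω, sSup ((fun α : Fin c → ℝ =>
      ‖(m : ℝ)⁻¹ • ∑ i, (σ i ω * G.mulVec α i) • ψ i‖) '' stdSimplex ℝ (Fin c))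
        ≤ (m : ℝ)⁻¹ * Real.sqrt (Q ω) := by
    intro ω
    refine Real.sSup_le ?_ (by positivity)
    rintro x ⟨α, hα, rfl⟩
    have hkey : ∑ i, (σ i ω * G.mulVec α i) • ψ i = ∑ j, α j • v j ω := by
      simp only [hv, hu, Matrix.mulVec, dotProduct, Finset.mul_sum, Finset.sum_smul,
        Finset.smul_sum, smul_smul]
      rw [Finset.sum_comm]
      exact Finset.sum_congr rfl fun j _ => Finset.sum_congr rfl fun i _ => by ring_nf
    show ‖(m : ℝ)⁻¹ • ∑ i, (σ i ω * G.mulVec α i) • ψ i‖ ≤ (m : ℝ)⁻¹ * Real.sqrt (Q ω)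
    rw [hkey, norm_smul, Real.norm_eq_abs, abs_of_nonneg (by positivity : (0:ℝ) ≤ (m:ℝ)⁻¹)]
    have hb : ‖∑ j, α j • v j ω‖ ≤ Real.sqrt (Q ω) := by
      calc ‖∑ j, α j • v j ω‖ ≤ ∑ j, ‖α j • v j ω‖ := norm_sum_le _ _
        _ = ∑ j, α j * ‖v j ω‖ := by
            refine Finset.sum_congr rfl fun j _ => ?_
            rw [norm_smul, Real.norm_eq_abs, abs_of_nonneg (hα.1 j)]
        _ ≤ ∑ j, α j * Real.sqrt (Q ω) := by
            refine Finset.sum_le_sum fun j _ => ?_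
            refine mul_le_mul_of_nonneg_left ?_ (hα.1 j)
            rw [show ‖v j ω‖ = Real.sqrt (‖v j ω‖ ^ 2) from
              (Real.sqrt_sq (norm_nonneg _)).symm]
            exact Real.sqrt_le_sqrt (Finset.single_le_sum
              (fun k (_ : k ∈ Finset.univ) => sq_nonneg ‖v k ω‖) (Finset.mem_univ j))
        _ = Real.sqrt (Q ω) := by rw [← Finset.sum_mul, hα.2, one_mul]
    exact mul_le_mul_of_nonneg_left hb (by positivity)
  -- integrability of the majorant
  have hMint : Integrable (fun ω => (m : ℝ)⁻¹ * Real.sqrt (Q ω)) μ := by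
    refine Integrable.const_mul ?_ _
    refine Integrable.mono' ((hQint.add (integrable_const 1)).div_const 2)
      (Real.continuous_sqrt.comp_aestronglyMeasurable hQint.1) ?_
    filter_upwards with ω
    have h := hQ0 ω
    have hs := Real.sq_sqrt h
    have hn := Real.sqrt_nonneg (Q ω)
    rw [Real.norm_eq_abs, abs_of_nonneg hn]
    simp only [Pi.add_apply]
    nlinarith [sq_nonneg (Real.sqrt (Q ω) - 1)]
  -- chain of inequalities
  have h1 : (∫ ω, sSup ((fun α : Fin c → ℝ =>
      ‖(m : ℝ)⁻¹ • ∑ i, (σ i ω * G.mulVec α i) • ψ i‖) '' stdSimplex ℝ (Fin c)) ∂μ)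
        ≤ ∫ ω, (m : ℝ)⁻¹ * Real.sqrt (Q ω) ∂μ := by
    refine integral_mono_of_nonneg ?_ hMint (Filter.Eventually.of_forall hsup)
    filter_upwards with ω
    exact Real.sSup_nonneg (by rintro x ⟨α, _, rfl⟩; exact norm_nonneg _)
  have h2 : ∫ ω, (m : ℝ)⁻¹ * Real.sqrt (Q ω) ∂μ
      = (m : ℝ)⁻¹ * ∫ ω, Real.sqrt (Q ω) ∂μ := integral_const_mul _ _
  have h3 : ∫ ω, Real.sqrt (Q ω) ∂μ ≤ Real.sqrt (∫ ω, Q ω ∂μ) :=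
    aux_integral_sqrt_le μ Q hQint hQ0
  have hQval : ∫ ω, Q ω ∂μ = ∑ j, ∑ i, ‖u j i‖ ^ 2 := by
    rw [show (∫ ω, Q ω ∂μ) = ∑ j, ∫ ω, ‖v j ω‖ ^ 2 ∂μ from
      integral_finset_sum _ fun j _ => hnvint j]
    exact Finset.sum_congr rfl fun j _ => hVval j
  rcases Nat.eq_zero_or_pos c with hc | hc
  · subst hc
    have hQz : ∀ ω, Q ω = 0 := fun ω => by simp [hQ]
    have : (∫ ω, Real.sqrt (Q ω) ∂μ) = 0 := by
      simp [hQz]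
    calc (∫ ω, sSup _ ∂μ) ≤ (m : ℝ)⁻¹ * ∫ ω, Real.sqrt (Q ω) ∂μ := h2 ▸ h1
      _ = 0 := by rw [this, mul_zero]
      _ ≤ ΛQ * ΛW * Real.sqrt ((0:ℕ)) / Real.sqrt m := by norm_num
  · have hΛQ : 0 ≤ ΛQ := le_trans (abs_nonneg _) (hG ⟨0, hm⟩ ⟨0, hc⟩)
    have hΛW : 0 ≤ ΛW := le_trans (norm_nonneg _) (hψ ⟨0, hm⟩)
    have hQb : ∫ ω, Q ω ∂μ ≤ (c : ℝ) * m * (ΛQ * ΛW) ^ 2 := by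
      rw [hQval]
      calc ∑ j, ∑ i, ‖u j i‖ ^ 2 ≤ ∑ j : Fin c, ∑ i : Fin m, (ΛQ * ΛW) ^ 2 := by
            refine Finset.sum_le_sum fun j _ => Finset.sum_le_sum fun i _ => ?_
            have h1 := hG i j
            have h2 := hψ i
            have h3 : ‖u j i‖ = |G i j| * ‖ψ i‖ := by
              simp [hu, norm_smul, Real.norm_eq_abs]
            rw [h3]
            have h4 : |G i j| * ‖ψ i‖ ≤ ΛQ * ΛW :=
              mul_le_mul h1 h2 (norm_nonneg _) hΛQ
            exact pow_le_pow_left₀ (by positivity) h4 2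
        _ = (c : ℝ) * m * (ΛQ * ΛW) ^ 2 := by
            simp [Finset.sum_const, Finset.card_univ, mul_comm, mul_assoc, mul_left_comm]
    have h4 : Real.sqrt (∫ ω, Q ω ∂μ) ≤ Real.sqrt ((c : ℝ) * m * (ΛQ * ΛW) ^ 2) :=
      Real.sqrt_le_sqrt hQb
    have h5 : Real.sqrt ((c : ℝ) * m * (ΛQ * ΛW) ^ 2)
        = Real.sqrt c * Real.sqrt m * (ΛQ * ΛW) := by
      rw [Real.sqrt_mul (by positivity), Real.sqrt_mul (Nat.cast_nonneg c),
        Real.sqrt_sq (by positivity)]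
    have hfinal : (m : ℝ)⁻¹ * (Real.sqrt c * Real.sqrt m * (ΛQ * ΛW))
        = ΛQ * ΛW * Real.sqrt c / Real.sqrt m := by
      have hsm : Real.sqrt m * Real.sqrt m = m := Real.mul_self_sqrt (le_of_lt hm0)
      have hsm0 : (0:ℝ) < Real.sqrt m := Real.sqrt_pos.2 hm0
      field_simp
      linear_combination (ΛQ * ΛW) * hsm
    calc (∫ ω, sSup _ ∂μ) ≤ (m : ℝ)⁻¹ * ∫ ω, Real.sqrt (Q ω) ∂μ := h2 ▸ h1
      _ ≤ (m : ℝ)⁻¹ * (Real.sqrt c * Real.sqrt m * (ΛQ * ΛW)) := by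
          refine mul_le_mul_of_nonneg_left ?_ (by positivity)
          exact le_trans h3 (h5 ▸ h4)
      _ = ΛQ * ΛW * Real.sqrt c / Real.sqrt m := hfinal
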